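/- arXiv:1807.02394 — 4 statements merged into one kernel-verified Lean document; each statement's English description precedes it below -/
import Mathlib

section
/- Let H be a real inner product space and B : H → H → ℝ a symmetric bilinear form. Let n be a natural number and let (ψ_j)_{j=1}^{n} and (φ_j)_{j=1}^{n} be families in H satisfying the biorthogonality condition ⟨ψ_i, φ_j⟩ = δ_{ij} for all 1 ≤ i, j ≤ n, and suppose that B(ψ_i, v) = 0 for every index i and every v ∈ H with ⟨v, φ_j⟩ = 0 for all j. Then for every u ∈ H, setting u* = Σ_{j=1}^{n} ⟨u, φ_j⟩ ψ_j, one has the Pythagorean decomposition B(u, u) = B(u*, u*) + B(u − u*, u − u*). -/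
open scoped RealInnerProductSpace

/-- Pythagorean decomposition of the energy via the biorthogonal
energy-minimizing basis (Lemma 3.1 of the paper, abstract form). -/
theorem energy_pythagorean_decomposition
    {H : Type*} [NormedAddCommGroup H] [InnerProductSpace ℝ H]
    (B : H →ₗ[ℝ] H →ₗ[ℝ] ℝ) (hBsymm : ∀ x y : H, B x y = B y x)
    (n : ℕ) (ψ φ : Fin n → H)
    (hbiortho : ∀ i j : Fin n, ⟪ψ i, φ j⟫ = if i = j then (1 : ℝ) else 0)
    (hortho : ∀ i : Fin n, ∀ v : H, (∀ j : Fin n, ⟪v, φ j⟫ = 0) → B (ψ i) v = 0)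
    (u : H) :
    B u u = B (∑ j, ⟪u, φ j⟫ • ψ j) (∑ j, ⟪u, φ j⟫ • ψ j)
      + B (u - ∑ j, ⟪u, φ j⟫ • ψ j) (u - ∑ j, ⟪u, φ j⟫ • ψ j) := by
  set s : H := ∑ j, ⟪u, φ j⟫ • ψ j with hs
  have he : ∀ j : Fin n, ⟪u - s, φ j⟫ = 0 := by
    intro j
    rw [inner_sub_left, hs, sum_inner]
    simp only [real_inner_smul_left, hbiortho]
    simp
  have hse : B s (u - s) = 0 := by
    rw [hs, map_sum]
    simp only [LinearMap.sum_apply, LinearMap.smul_apply, LinearMap.map_smul]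
    rw [Finset.sum_eq_zero]
    intro i _
    have h0 := hortho i _ he
    rw [hs] at h0
    simp only [h0, smul_zero, mul_zero]
  have hes : B (u - s) s = 0 := by rw [hBsymm]; exact hse
  have hu : u = s + (u - s) := by abel
  conv_lhs => rw [hu]
  simp only [map_add, LinearMap.add_apply, hse, hes]
  ring
end

section
/- Let H be a real Hilbert space with a Hilbert basis (orthonormal basis) (e_α) indexed by multi-indices α : Fin r → ℕ. Let u ∈ H, let ν : Fin r → ℕ satisfy ν_i ≥ 1 for every i, and suppose that for each i ∈ Fin r there exists v_i ∈ H such that (α_i(α_i + 1))^{ν_i} · |⟨u, e_α⟩| ≤ |⟨v_i, e_α⟩| for every multi-index α. Then for every N : Fin r → ℕ with N_i ≥ 1 for all i, the truncation over the box {α : α_i ≤ N_i for all i} satisfies ‖u − Σ_{α : ∀ i, α_i ≤ N_i} ⟨u, e_α⟩ e_α‖² ≤ Σ_{i=1}^{r} N_i^{−4ν_i} · ‖v_i‖². -/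
open scoped RealInnerProductSpace

/-- Abstract form of Corollary 4.3 (tensorized spectral convergence of the
gPC projection): if for each direction `i` the coefficients of `u` in a
Hilbert basis indexed by multi-indices `α : Fin r → ℕ` satisfy
`(α_i(α_i+1))^{ν_i} |⟪u, e α⟫| ≤ |⟪v_i, e α⟫|`, then the error of the
truncation over the box `{α | ∀ i, α_i ≤ N_i}` is bounded by
`∑ i, N_i^{-4ν_i} ‖v_i‖²`. -/
theorem hilbert_basis_tensor_truncation_error
    {H : Type*} [NormedAddCommGroup H] [InnerProductSpace ℝ H] [CompleteSpace H]
    (r : ℕ) (e : HilbertBasis (Fin r → ℕ) ℝ H)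
    (u : H) (ν : Fin r → ℕ) (hν : ∀ i, 1 ≤ ν i) (v : Fin r → H)
    (hcoeff : ∀ i : Fin r, ∀ α : Fin r → ℕ,
      ((α i * (α i + 1) : ℕ) : ℝ) ^ (ν i) * |⟪u, e α⟫| ≤ |⟪v i, e α⟫|) :
    ∀ N : Fin r → ℕ, (∀ i, 1 ≤ N i) →
      ‖u - ∑ α ∈ Fintype.piFinset (fun i => Finset.range (N i + 1)),
          ⟪u, e α⟫ • e α‖ ^ 2
        ≤ ∑ i : Fin r, (((N i : ℝ)) ^ (4 * ν i))⁻¹ * ‖v i‖ ^ 2 := by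
  intro N hN
  classical
  set s := Fintype.piFinset (fun i => Finset.range (N i + 1)) with hs
  set w := u - ∑ α ∈ s, ⟪u, e α⟫ • e α with hwdef
  -- coefficients of w
  have hw : ∀ α, ⟪w, e α⟫ = if α ∈ s then 0 else ⟪u, e α⟫ := by
    intro α
    rw [hwdef, inner_sub_left]
    by_cases hα : α ∈ s
    · rw [e.orthonormal.inner_left_sum _ hα]
      simp [hα]
    · have hz : ⟪∑ β ∈ s, ⟪u, e β⟫ • e β, e α⟫ = 0 := by
        rw [sum_inner]
        refine Finset.sum_eq_zero fun β hβ => ?_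
        rw [inner_smul_left]
        have : ⟪e β, e α⟫ = 0 := e.orthonormal.2 (fun h => hα (h ▸ hβ))
        simp [this]
      simp [hz, hα]
  -- Parseval for w
  have hpar : ‖w‖ ^ 2 = ∑' α, ⟪w, e α⟫ * ⟪w, e α⟫ := by
    rw [← real_inner_self_eq_norm_sq, ← e.tsum_inner_mul_inner w w]
    congr 1; ext α; rw [real_inner_comm (e α) w]
  set f : (Fin r → ℕ) → ℝ := fun α => ⟪w, e α⟫ * ⟪w, e α⟫ with hf
  set g : Fin r → (Fin r → ℕ) → ℝ := fun i α =>
    if N i < α i then (((N i : ℝ)) ^ (4 * ν i))⁻¹ * (⟪v i, e α⟫ * ⟪v i, e α⟫) else 0 with hg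
  have hgnonneg : ∀ i α, 0 ≤ g i α := by
    intro i α
    simp only [hg]
    split
    · exact mul_nonneg (inv_nonneg.2 (by positivity)) (mul_self_nonneg _)
    · exact le_refl 0
  -- pointwise bound f ≤ ∑ i, g i
  have hpt : ∀ α, f α ≤ ∑ i : Fin r, g i α := by
    intro α
    by_cases hα : α ∈ s
    · have : f α = 0 := by simp [hf, hw α, hα]
      rw [this]
      exact Finset.sum_nonneg fun i _ => hgnonneg i α
    · -- there exists i with N i < α i
      have : ¬ ∀ i, α i ∈ Finset.range (N i + 1) := by
        intro h; exact hα (Fintype.mem_piFinset.2 h)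
      push_neg at this
      obtain ⟨i, hi⟩ := this
      have hNi : N i < α i := by
        by_contra h
        exact hi (Finset.mem_range.2 (Nat.lt_succ_of_le (not_lt.1 h)))
      have hfa : f α = ⟪u, e α⟫ * ⟪u, e α⟫ := by simp [hf, hw α, hα]
      have hkey : f α ≤ g i α := by
        rw [hfa]
        simp only [hg, if_pos hNi]
        -- from hcoeff: (α i * (α i + 1))^{ν i} * |⟪u, e α⟫| ≤ |⟪v i, e α⟫|
        have h1 := hcoeff i α
        have hNpos : (0 : ℝ) < (N i : ℝ) := by exact_mod_cast hN i
        have h2 : ((N i : ℝ)) ^ (2 * ν i) ≤ ((α i * (α i + 1) : ℕ) : ℝ) ^ (ν i) := by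
          have : ((N i : ℝ)) ^ 2 ≤ ((α i * (α i + 1) : ℕ) : ℝ) := by
            push_cast
            have h3 : (N i : ℝ) ≤ (α i : ℝ) := by exact_mod_cast hNi.le
            have h4 : (N i : ℝ) ≤ (α i : ℝ) + 1 := by linarith
            calc ((N i : ℝ)) ^ 2 = (N i : ℝ) * (N i : ℝ) := sq (N i : ℝ) ▸ by ring
              _ ≤ (α i : ℝ) * ((α i : ℝ) + 1) :=
                mul_le_mul h3 h4 hNpos.le (by positivity)
          calc ((N i : ℝ)) ^ (2 * ν i) = (((N i : ℝ)) ^ 2) ^ (ν i) := by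
                rw [← pow_mul]
            _ ≤ ((α i * (α i + 1) : ℕ) : ℝ) ^ (ν i) :=
                pow_le_pow_left₀ (by positivity) this _
        have h5 : ((N i : ℝ)) ^ (2 * ν i) * |⟪u, e α⟫| ≤ |⟪v i, e α⟫| :=
          le_trans (mul_le_mul_of_nonneg_right h2 (abs_nonneg _)) h1
        have h6 : (((N i : ℝ)) ^ (2 * ν i) * |⟪u, e α⟫|) ^ 2 ≤ |⟪v i, e α⟫| ^ 2 :=
          pow_le_pow_left₀ (by positivity) h5 2
        have h7 : ((N i : ℝ)) ^ (4 * ν i) * (⟪u, e α⟫ * ⟪u, e α⟫) ≤ ⟪v i, e α⟫ * ⟪v i, e α⟫ := by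
          have e1 : (((N i : ℝ)) ^ (2 * ν i) * |⟪u, e α⟫|) ^ 2
              = ((N i : ℝ)) ^ (4 * ν i) * (⟪u, e α⟫ * ⟪u, e α⟫) := by
            rw [mul_pow, ← pow_mul, sq_abs]
            ring_nf
          have e2 : |⟪v i, e α⟫| ^ 2 = ⟪v i, e α⟫ * ⟪v i, e α⟫ := by
            rw [sq_abs]; ring
          rw [← e1, ← e2]; exact h6
        have hNp : (0 : ℝ) < ((N i : ℝ)) ^ (4 * ν i) := by positivity
        calc ⟪u, e α⟫ * ⟪u, e α⟫
            = (((N i : ℝ)) ^ (4 * ν i))⁻¹ * (((N i : ℝ)) ^ (4 * ν i) * (⟪u, e α⟫ * ⟪u, e α⟫)) := by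
              field_simp
          _ ≤ (((N i : ℝ)) ^ (4 * ν i))⁻¹ * (⟪v i, e α⟫ * ⟪v i, e α⟫) :=
              mul_le_mul_of_nonneg_left h7 (inv_nonneg.2 hNp.le)
      exact le_trans hkey
        (Finset.single_le_sum (fun j _ => hgnonneg j α) (Finset.mem_univ i))
  -- summability
  have hfs : Summable f := by
    have := e.summable_inner_mul_inner w w
    refine this.congr (fun α => ?_)
    show _ = ⟪w, e α⟫ * ⟪w, e α⟫
    rw [real_inner_comm (e α) w]
  have hgs : ∀ i, Summable (g i) := by
    intro i
    have h := (e.summable_inner_mul_inner (v i) (v i)).mul_left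
      ((((N i : ℝ)) ^ (4 * ν i))⁻¹)
    refine h.of_nonneg_of_le (hgnonneg i) ?_
    intro α
    simp only [hg]
    split
    · rw [real_inner_comm (e α) (v i)]
    · rw [real_inner_comm (e α) (v i)]
      exact mul_nonneg (inv_nonneg.2 (by positivity)) (mul_self_nonneg _)
  have hGs : Summable (fun α => ∑ i : Fin r, g i α) :=
    summable_sum (fun i _ => hgs i)
  -- main chain
  have h1 : ‖w‖ ^ 2 ≤ ∑' α, ∑ i : Fin r, g i α := by
    rw [hpar]
    exact Summable.tsum_le_tsum hpt hfs hGs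
  have h2 : ∑' α, ∑ i : Fin r, g i α = ∑ i : Fin r, ∑' α, g i α :=
    Summable.tsum_finsetSum (fun i _ => hgs i)
  have h3 : ∀ i : Fin r, ∑' α, g i α ≤ (((N i : ℝ)) ^ (4 * ν i))⁻¹ * ‖v i‖ ^ 2 := by
    intro i
    have hb : ∑' α, (((N i : ℝ)) ^ (4 * ν i))⁻¹ * (⟪v i, e α⟫ * ⟪v i, e α⟫)
        = (((N i : ℝ)) ^ (4 * ν i))⁻¹ * ‖v i‖ ^ 2 := by
      rw [tsum_mul_left]
      congr 1
      rw [← real_inner_self_eq_norm_sq, ← e.tsum_inner_mul_inner (v i) (v i)]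
      congr 1; ext α; rw [real_inner_comm (e α) (v i)]
    rw [← hb]
    refine Summable.tsum_le_tsum ?_ (hgs i)
      ((e.summable_inner_mul_inner (v i) (v i)).mul_left _ |>.congr
        (fun α => by rw [real_inner_comm (e α) (v i)]))
    intro α
    simp only [hg]
    split
    · exact le_refl _
    · exact mul_nonneg (by positivity) (mul_self_nonneg _)
  calc ‖w‖ ^ 2 ≤ ∑ i : Fin r, ∑' α, g i α := by rw [← h2]; exact h1
    _ ≤ ∑ i : Fin r, (((N i : ℝ)) ^ (4 * ν i))⁻¹ * ‖v i‖ ^ 2 :=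
        Finset.sum_le_sum (fun i _ => h3 i)
end

section
/- Fix positive integers n, m, r and a real number α > 1. Let γ denote the standard Gaussian measure on ℝ^n (the n-fold product of the real Gaussian measure with mean 0 and variance 1), and let γ^{⊗r} be the r-fold product measure on (ℝ^n)^r, describing r independent standard Gaussian vectors ω^1, …, ω^r ∈ ℝ^n. Then for every continuous linear map T from the Euclidean space ℝ^n to the Euclidean space ℝ^m, γ^{⊗r}({(ω^1, …, ω^r) : ‖T‖ > α · √(2/π) · max_{1 ≤ j ≤ r} ‖T ω^j‖}) ≤ α^{−r}, where ‖T‖ is the operator norm of T and ‖T ω^j‖ the Euclidean norm. -/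
open MeasureTheory ProbabilityTheory Real RealInnerProductSpace

namespace GaussAux

lemma pdf_mul_pdf (a b : NNReal) (ha : a ≠ 0) (hb : b ≠ 0) (u x : ℝ) :
    gaussianPDFReal 0 a x * gaussianPDFReal 0 b (u - x) =
      gaussianPDFReal 0 (a + b) u *
        gaussianPDFReal ((a:ℝ) * u / ((a:ℝ) + b)) (a * b / (a + b)) x := by
  have ha' : (0:ℝ) < a := lt_of_le_of_ne a.coe_nonneg (by exact_mod_cast (Ne.symm ha))
  have hb' : (0:ℝ) < b := lt_of_le_of_ne b.coe_nonneg (by exact_mod_cast (Ne.symm hb))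
  have hab : (0:ℝ) < (a:ℝ) + b := by linarith
  have hpi : (0:ℝ) < π := Real.pi_pos
  simp only [gaussianPDFReal, NNReal.coe_add, NNReal.coe_div, NNReal.coe_mul, sub_zero]
  have hconst : (√(2 * π * a))⁻¹ * (√(2 * π * b))⁻¹
      = (√(2 * π * ((a:ℝ) + b)))⁻¹ * (√(2 * π * ((a:ℝ) * b / ((a:ℝ) + b))))⁻¹ := by
    rw [← mul_inv, ← mul_inv, ← Real.sqrt_mul (by positivity), ← Real.sqrt_mul (by positivity)]
    congr 1
    congr 1
    field_simp
  have hexp : rexp (-x ^ 2 / (2 * a)) * rexp (-(u - x) ^ 2 / (2 * b))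
      = rexp (-u ^ 2 / (2 * ((a:ℝ) + b))) *
        rexp (-(x - (a:ℝ) * u / ((a:ℝ) + b)) ^ 2 / (2 * ((a:ℝ) * b / ((a:ℝ) + b)))) := by
    rw [← Real.exp_add, ← Real.exp_add]
    congr 1
    field_simp
    ring
  calc (√(2 * π * a))⁻¹ * rexp (-x ^ 2 / (2 * a)) * ((√(2 * π * b))⁻¹ * rexp (-(u - x) ^ 2 / (2 * b)))
      = ((√(2 * π * a))⁻¹ * (√(2 * π * b))⁻¹) * (rexp (-x ^ 2 / (2 * a)) * rexp (-(u - x) ^ 2 / (2 * b))) := by ring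
    _ = _ := by rw [hconst, hexp]; ring

lemma lintegral_pdf_mul (a b : NNReal) (ha : a ≠ 0) (hb : b ≠ 0) (u : ℝ) :
    ∫⁻ x, ENNReal.ofReal (gaussianPDFReal 0 a x * gaussianPDFReal 0 b (u - x)) =
      gaussianPDF 0 (a + b) u := by
  have hc : a * b / (a + b) ≠ 0 := by
    have : a + b ≠ 0 := fun h => ha (by simpa using (add_eq_zero.mp h).1)
    simp [div_eq_zero_iff, mul_eq_zero, ha, hb, this]
  rw [lintegral_congr (fun x => by
    rw [pdf_mul_pdf a b ha hb u x,
      ENNReal.ofReal_mul (gaussianPDFReal_nonneg 0 (a+b) u)])]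
  rw [lintegral_const_mul _ ((measurable_gaussianPDFReal _ _).ennreal_ofReal)]
  rw [show (fun x => ENNReal.ofReal (gaussianPDFReal ((a:ℝ) * u / ((a:ℝ) + b))
      (a * b / (a + b)) x)) = gaussianPDF _ _ from rfl]
  rw [lintegral_gaussianPDF_eq_one _ hc, mul_one, gaussianPDF]

end GaussAux

namespace GaussAux

lemma gauss_conv (a b : NNReal) :
    Measure.map (fun p : ℝ × ℝ => p.1 + p.2)
      ((gaussianReal 0 a).prod (gaussianReal 0 b)) = gaussianReal 0 (a + b) := by
  rcases eq_or_ne a 0 with rfl | ha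
  · rw [gaussianReal_zero_var, zero_add]
    rw [MeasureTheory.Measure.dirac_prod]
    rw [Measure.map_map (by fun_prop) (by fun_prop)]
    simp [Function.comp_def]
  rcases eq_or_ne b 0 with rfl | hb
  · rw [gaussianReal_zero_var, add_zero]
    rw [MeasureTheory.Measure.prod_dirac]
    rw [Measure.map_map (by fun_prop) (by fun_prop)]
    simp [Function.comp_def]
  have hab : a + b ≠ 0 := fun h => ha (by simpa using (add_eq_zero.mp h).1)
  ext s hs
  rw [Measure.map_apply (by fun_prop) hs]
  rw [Measure.prod_apply (hs.preimage (by fun_prop))]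
  have h1 : ∀ x : ℝ, gaussianReal 0 b (Prod.mk x ⁻¹' ((fun p : ℝ × ℝ => p.1 + p.2) ⁻¹' s))
      = ∫⁻ u in s, ENNReal.ofReal (gaussianPDFReal 0 b (u - x)) := by
    intro x
    have : Prod.mk x ⁻¹' ((fun p : ℝ × ℝ => p.1 + p.2) ⁻¹' s) = (fun y => x + y) ⁻¹' s := rfl
    rw [this, ← Measure.map_apply (by fun_prop) hs, gaussianReal_map_const_add x, zero_add,
      gaussianReal_apply _ hb]
    refine setLIntegral_congr_fun hs (fun u _ => ?_)
    rw [gaussianPDF, gaussianPDFReal_sub, zero_add]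
  simp_rw [h1]
  have hF : Measurable (Function.uncurry fun x u =>
      ENNReal.ofReal (gaussianPDFReal 0 a x * gaussianPDFReal 0 b (u - x))) := by
    apply Measurable.ennreal_ofReal
    exact ((measurable_gaussianPDFReal 0 a).comp measurable_fst).mul
      ((measurable_gaussianPDFReal 0 b).comp (measurable_snd.sub measurable_fst))
  have hg : Measurable fun x : ℝ => ∫⁻ u in s, ENNReal.ofReal (gaussianPDFReal 0 b (u - x)) := by
    apply Measurable.lintegral_prod_right
    exact Measurable.ennreal_ofReal
      ((measurable_gaussianPDFReal 0 b).comp (measurable_snd.sub measurable_fst))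
  rw [gaussianReal_of_var_ne_zero 0 ha,
    lintegral_withDensity_eq_lintegral_mul _ (measurable_gaussianPDF 0 a) hg]
  have h2 : ∀ x : ℝ, (gaussianPDF 0 a * fun x => ∫⁻ u in s,
        ENNReal.ofReal (gaussianPDFReal 0 b (u - x))) x
      = ∫⁻ u in s, ENNReal.ofReal (gaussianPDFReal 0 a x * gaussianPDFReal 0 b (u - x)) := by
    intro x
    rw [Pi.mul_apply, ← lintegral_const_mul _ (by
      exact Measurable.ennreal_ofReal ((measurable_gaussianPDFReal 0 b).comp
        (measurable_id.sub measurable_const)))]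
    exact lintegral_congr fun u => by
      rw [gaussianPDF, ← ENNReal.ofReal_mul (gaussianPDFReal_nonneg 0 a x)]
  rw [lintegral_congr h2, lintegral_lintegral_swap hF.aemeasurable]
  rw [lintegral_congr fun u => lintegral_pdf_mul a b ha hb u]
  rw [gaussianReal_apply _ hab]

end GaussAux

namespace GaussAux

lemma map_sum_gauss : ∀ (n : ℕ) (w : Fin n → ℝ),
    Measure.map (fun ω : Fin n → ℝ => ∑ i, w i * ω i)
      (Measure.pi fun _ : Fin n => gaussianReal 0 1)
    = gaussianReal 0 (∑ i, Real.toNNReal (w i ^ 2)) := by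
  intro n
  induction n with
  | zero =>
    intro w
    have : (fun ω : Fin 0 → ℝ => ∑ i, w i * ω i) = fun _ => (0:ℝ) := by
      funext ω; simp
    rw [this, Measure.map_const]
    simp [gaussianReal_zero_var]
  | succ n ih =>
    intro w
    have hmp := measurePreserving_piFinSuccAbove (fun _ : Fin (n+1) => (gaussianReal 0 1)) 0
    set e := MeasurableEquiv.piFinSuccAbove (fun _ : Fin (n+1) => ℝ) 0 with he
    have hmeas : Measurable (fun ω : Fin (n+1) → ℝ => ∑ i, w i * ω i) :=
      Finset.measurable_sum _ fun i _ => (measurable_pi_apply i).const_mul _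
    have key : (fun ω : Fin (n+1) → ℝ => ∑ i, w i * ω i) =
        ((fun p : ℝ × ℝ => p.1 + p.2) ∘
          Prod.map (fun x : ℝ => w 0 * x)
            (fun y : Fin n → ℝ => ∑ j, w (Fin.succ j) * y j)) ∘ e := by
      funext ω
      simp only [Function.comp_apply, he, MeasurableEquiv.piFinSuccAbove_apply, Prod.map,
        Fin.sum_univ_succ, Fin.succAbove_zero, Fin.insertNthEquiv, Equiv.coe_fn_symm_mk,
        Fin.removeNth]
    rw [key, ← Measure.map_map (by fun_prop) e.measurable, hmp.map_eq,
        ← Measure.map_map (by fun_prop) (by fun_prop),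
        ← Measure.map_prod_map _ _ (by fun_prop) (by fun_prop),
        gaussianReal_map_const_mul (w 0), ih, mul_zero, gauss_conv]
    congr 1
    rw [Fin.sum_univ_succ]
    congr 1
    ext
    simp [Real.coe_toNNReal _ (sq_nonneg (w 0))]

end GaussAux

namespace GaussAux

lemma gauss_small (v : NNReal) (hv : v ≠ 0) (t : ℝ) :
    gaussianReal 0 v {x : ℝ | |x| < t} ≤ ENNReal.ofReal (2 * t / Real.sqrt (2 * π * v)) := by
  have hset : {x : ℝ | |x| < t} = Set.Ioo (-t) t := by
    ext x; simp [abs_lt, and_comm]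
  have hs : (0:ℝ) < Real.sqrt (2 * π * v) := Real.sqrt_pos.mpr (by
    have : (0:ℝ) < v := lt_of_le_of_ne v.coe_nonneg (by exact_mod_cast (Ne.symm hv))
    positivity)
  calc gaussianReal 0 v {x : ℝ | |x| < t}
      = ∫⁻ x in Set.Ioo (-t) t, gaussianPDF 0 v x := by
        rw [hset, gaussianReal_apply 0 hv]
    _ ≤ ∫⁻ _ in Set.Ioo (-t) t, ENNReal.ofReal ((Real.sqrt (2 * π * v))⁻¹) := by
        refine lintegral_mono fun x => ?_
        rw [gaussianPDF]
        refine ENNReal.ofReal_le_ofReal ?_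
        rw [gaussianPDFReal]
        calc (Real.sqrt (2 * π * v))⁻¹ * rexp (-(x - 0) ^ 2 / (2 * v))
            ≤ (Real.sqrt (2 * π * v))⁻¹ * 1 := by
              refine mul_le_mul_of_nonneg_left ?_ (by positivity)
              rw [Real.exp_le_one_iff]
              have : (0:ℝ) < v := lt_of_le_of_ne v.coe_nonneg (by exact_mod_cast (Ne.symm hv))
              have h2 : (0:ℝ) ≤ (x - 0)^2 := sq_nonneg _
              have : (0:ℝ) < 2 * v := by positivity
              exact div_nonpos_of_nonpos_of_nonneg (by linarith) (by positivity)
          _ = _ := mul_one _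
    _ = ENNReal.ofReal ((Real.sqrt (2 * π * v))⁻¹) * volume (Set.Ioo (-t) t) := by
        rw [setLIntegral_const]
    _ ≤ ENNReal.ofReal (2 * t / Real.sqrt (2 * π * v)) := by
        rw [Real.volume_Ioo, ← ENNReal.ofReal_mul (by positivity)]
        refine ENNReal.ofReal_le_ofReal (le_of_eq ?_)
        rw [div_eq_inv_mul]
        ring

end GaussAux

namespace GaussAux
open RealInnerProductSpace

lemma exists_dual_vec (n m : ℕ) (hn : 0 < n)
    (T : EuclideanSpace ℝ (Fin n) →L[ℝ] EuclideanSpace ℝ (Fin m)) (hT : T ≠ 0) :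
    ∃ v : EuclideanSpace ℝ (Fin n), ‖v‖ = ‖T‖ ∧ ∀ x, |⟪v, x⟫| ≤ ‖T x‖ := by
  haveI : Nonempty (Fin n) := ⟨⟨0, hn⟩⟩
  have hsne : (Metric.sphere (0 : EuclideanSpace ℝ (Fin n)) 1).Nonempty := by
    rw [NormedSpace.sphere_nonempty]; norm_num
  obtain ⟨x₀, hx₀s, hmax⟩ := (isCompact_sphere (0 : EuclideanSpace ℝ (Fin n)) 1).exists_isMaxOn
    hsne (T.continuous.norm.continuousOn)
  have hx₀ : ‖x₀‖ = 1 := by simpa using hx₀s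
  have hnorm : ‖T‖ = ‖T x₀‖ := by
    refine le_antisymm ?_ ?_
    · refine T.opNorm_le_bound (norm_nonneg _) fun x => ?_
      rcases eq_or_ne x 0 with rfl | hx
      · simp
      · have hxn : (0:ℝ) < ‖x‖ := norm_pos_iff.mpr hx
        have hy : (‖x‖⁻¹ • x) ∈ Metric.sphere (0 : EuclideanSpace ℝ (Fin n)) 1 := by
          simp [norm_smul, abs_of_nonneg (le_of_lt (inv_pos.mpr hxn)),
            inv_mul_cancel₀ (ne_of_gt hxn)]
        have h3 := hmax hy
        have h4 : ‖x‖⁻¹ * ‖T x‖ ≤ ‖T x₀‖ := by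
          have : T (‖x‖⁻¹ • x) = ‖x‖⁻¹ • T x := by rw [T.map_smul]
          simpa [this, norm_smul, abs_of_nonneg (le_of_lt (inv_pos.mpr hxn))] using h3
        calc ‖T x‖ = ‖x‖ * (‖x‖⁻¹ * ‖T x‖) := by field_simp
          _ ≤ ‖x‖ * ‖T x₀‖ := mul_le_mul_of_nonneg_left h4 (le_of_lt hxn)
          _ = ‖T x₀‖ * ‖x‖ := mul_comm _ _
    · simpa [hx₀] using T.le_opNorm x₀
  have hTx₀ : ‖T x₀‖ ≠ 0 := by
    rw [← hnorm]; exact ne_of_gt (norm_pos_iff.mpr hT)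
  set u : EuclideanSpace ℝ (Fin m) := ‖T x₀‖⁻¹ • T x₀ with hu
  have hun : ‖u‖ = 1 := by
    rw [hu, norm_smul, norm_inv, norm_norm, inv_mul_cancel₀ hTx₀]
  set v := ContinuousLinearMap.adjoint T u with hv
  have hineq : ∀ x, |⟪v, x⟫| ≤ ‖T x‖ := by
    intro x
    rw [hv, ContinuousLinearMap.adjoint_inner_left]
    calc |⟪u, T x⟫| ≤ ‖u‖ * ‖T x‖ := abs_real_inner_le_norm _ _
      _ = ‖T x‖ := by rw [hun, one_mul]
  refine ⟨v, le_antisymm ?_ ?_, hineq⟩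
  · calc ‖v‖ ≤ ‖ContinuousLinearMap.adjoint T‖ * ‖u‖ := (ContinuousLinearMap.adjoint T).le_opNorm u
      _ = ‖T‖ := by rw [hun, mul_one]; exact LinearIsometryEquiv.norm_map _ T
  · have h1 : ⟪v, x₀⟫ = ‖T x₀‖ := by
      rw [hv, ContinuousLinearMap.adjoint_inner_left, hu, real_inner_smul_left,
        real_inner_self_eq_norm_sq]
      field_simp
    calc ‖T‖ = ⟪v, x₀⟫ := by rw [h1, hnorm]
      _ ≤ ‖v‖ * ‖x₀‖ := real_inner_le_norm _ _
      _ = ‖v‖ := by rw [hx₀, mul_one]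

end GaussAux


/-- Probabilistic a posteriori operator-norm estimate (Appendix Lemma B.1 of
the paper, after Woolfe et al.): for `r` independent standard Gaussian vectors
`ω^1, …, ω^r` in `ℝ^n` and any continuous linear map `T : ℝ^n → ℝ^m`, except
with probability at most `α^{-r}` one has
`‖T‖ ≤ α √(2/π) max_j ‖T ω^j‖`. -/
theorem gaussian_operator_norm_estimate
    (n m r : ℕ) (hn : 0 < n) (hm : 0 < m) (hr : 0 < r)
    (α : ℝ) (hα : 1 < α) :
    ∀ T : EuclideanSpace ℝ (Fin n) →L[ℝ] EuclideanSpace ℝ (Fin m),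
      (Measure.pi fun _ : Fin r =>
          (Measure.pi fun _ : Fin n => gaussianReal 0 1))
        {ω : Fin r → Fin n → ℝ |
          ‖T‖ > α * Real.sqrt (2 / Real.pi) *
            ⨆ j : Fin r, ‖T ((WithLp.equiv 2 (∀ _ : Fin n, ℝ)).symm (ω j))‖}
        ≤ ENNReal.ofReal ((α ^ r)⁻¹) := by
  intro T
  have hπ : 0 < Real.pi := Real.pi_pos
  have hα0 : 0 < α := lt_trans one_pos hα
  set c := α * Real.sqrt (2 / Real.pi) with hc
  have hcpos : 0 < c := by
    have : 0 < Real.sqrt (2 / Real.pi) := Real.sqrt_pos.mpr (by positivity)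
    positivity
  by_cases hT : T = 0
  · have hset : {ω : Fin r → Fin n → ℝ |
        ‖T‖ > c * ⨆ j : Fin r, ‖T ((WithLp.equiv 2 (∀ _ : Fin n, ℝ)).symm (ω j))‖} = ∅ := by
      ext ω
      simp only [Set.mem_setOf_eq, Set.mem_empty_iff_false, iff_false, not_lt]
      have h0 : (0:ℝ) ≤ ⨆ j : Fin r, ‖T ((WithLp.equiv 2 (∀ _ : Fin n, ℝ)).symm (ω j))‖ :=
        Real.iSup_nonneg fun j => norm_nonneg _
      have hT0 : ‖T‖ = 0 := by rw [hT]; simp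
      rw [hT0]
      exact mul_nonneg hcpos.le h0
    rw [hset]
    simp
  · obtain ⟨v, hvn, hvle⟩ := GaussAux.exists_dual_vec n m hn T hT
    have hTpos : 0 < ‖T‖ := norm_pos_iff.mpr hT
    set t : ℝ := ‖T‖ / c with ht
    set w : Fin n → ℝ := fun i => v i with hw
    set A : Set (Fin n → ℝ) := {x | |∑ i, w i * x i| < t} with hA
    set μn := Measure.pi fun _ : Fin n => gaussianReal (0:ℝ) 1 with hμn
    have hsub : {ω : Fin r → Fin n → ℝ |
        ‖T‖ > c * ⨆ j : Fin r, ‖T ((WithLp.equiv 2 (∀ _ : Fin n, ℝ)).symm (ω j))‖}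
        ⊆ Set.pi Set.univ (fun _ : Fin r => A) := by
      intro ω hω j _
      simp only [Set.mem_setOf_eq] at hω
      have hbdd : BddAbove (Set.range fun j : Fin r =>
          ‖T ((WithLp.equiv 2 (∀ _ : Fin n, ℝ)).symm (ω j))‖) :=
        Set.Finite.bddAbove (Set.finite_range _)
      have hle : ‖T ((WithLp.equiv 2 (∀ _ : Fin n, ℝ)).symm (ω j))‖ ≤
          ⨆ j : Fin r, ‖T ((WithLp.equiv 2 (∀ _ : Fin n, ℝ)).symm (ω j))‖ := le_ciSup hbdd j
      have h2 : c * ‖T ((WithLp.equiv 2 (∀ _ : Fin n, ℝ)).symm (ω j))‖ < ‖T‖ :=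
        lt_of_le_of_lt (mul_le_mul_of_nonneg_left hle hcpos.le) hω
      have h3 : ‖T ((WithLp.equiv 2 (∀ _ : Fin n, ℝ)).symm (ω j))‖ < t := by
        rw [ht, lt_div_iff₀ hcpos, mul_comm]; exact h2
      show |∑ i, w i * ω j i| < t
      have hinner : ∑ i, w i * ω j i = ⟪v, (WithLp.equiv 2 (∀ _ : Fin n, ℝ)).symm (ω j)⟫ := by
        rw [PiLp.inner_apply]
        simp [RCLike.inner_apply, hw]
        exact Finset.sum_congr rfl fun i _ => mul_comm _ _
      rw [hinner]
      exact lt_of_le_of_lt (hvle _) h3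
    refine le_trans (measure_mono hsub) ?_
    rw [Measure.pi_pi]
    have hmeaslin : Measurable fun x : Fin n → ℝ => ∑ i, w i * x i :=
      Finset.measurable_sum _ fun i _ => (measurable_pi_apply i).const_mul _
    have hBmeas : MeasurableSet {y : ℝ | |y| < t} := by
      have : {y : ℝ | |y| < t} = Set.Ioo (-t) t := by ext y; simp [abs_lt, and_comm]
      rw [this]; exact measurableSet_Ioo
    have hfac : μn A ≤ ENNReal.ofReal α⁻¹ := by
      have hApre : A = (fun x : Fin n → ℝ => ∑ i, w i * x i) ⁻¹' {y | |y| < t} := rfl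
      rw [hApre, hμn, ← Measure.map_apply hmeaslin hBmeas, GaussAux.map_sum_gauss n w]
      set V := ∑ i, (w i ^ 2).toNNReal with hV
      have hVr : (V : ℝ) = ‖T‖ ^ 2 := by
        have h1 : (V : ℝ) = ∑ i, w i ^ 2 := by
          rw [hV, NNReal.coe_sum]
          exact Finset.sum_congr rfl fun i _ => Real.coe_toNNReal _ (sq_nonneg _)
        have h2 : ∑ i, w i ^ 2 = ⟪v, v⟫ := by
          rw [PiLp.inner_apply]
          simp [RCLike.inner_apply, hw, sq]
        rw [h1, h2, real_inner_self_eq_norm_sq, hvn]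
      have hVne : V ≠ 0 := by
        intro h
        rw [h] at hVr
        simp only [NNReal.coe_zero] at hVr
        nlinarith
      refine le_trans (GaussAux.gauss_small V hVne t) ?_
      refine ENNReal.ofReal_le_ofReal (le_of_eq ?_)
      have hs1 : Real.sqrt (2 * Real.pi * (V:ℝ)) = Real.sqrt (2 * Real.pi) * ‖T‖ := by
        rw [hVr, Real.sqrt_mul (by positivity), Real.sqrt_sq (norm_nonneg _)]
      have hs2 : Real.sqrt (2 / Real.pi) * Real.sqrt (2 * Real.pi) = 2 := by
        rw [← Real.sqrt_mul (by positivity)]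
        have : 2 / Real.pi * (2 * Real.pi) = 2 ^ 2 := by field_simp
        rw [this, Real.sqrt_sq (by norm_num)]
      have hsp : 0 < Real.sqrt (2 * Real.pi) := Real.sqrt_pos.mpr (by positivity)
      have hsp2 : 0 < Real.sqrt (2 / Real.pi) := Real.sqrt_pos.mpr (by positivity)
      rw [hs1, ht, hc]
      have h22 : Real.sqrt 2 * Real.sqrt 2 = 2 := Real.mul_self_sqrt (by norm_num)
      field_simp
      linear_combination -hs2
    calc ∏ _j : Fin r, μn A = μn A ^ r := by
          rw [Finset.prod_const, Finset.card_univ, Fintype.card_fin]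
      _ ≤ (ENNReal.ofReal α⁻¹) ^ r := pow_le_pow_left' hfac r
      _ = ENNReal.ofReal ((α ^ r)⁻¹) := by
          rw [← ENNReal.ofReal_pow (inv_nonneg.mpr hα0.le), inv_pow]
end

section
/- Let u : ℝ → ℝ be twice continuously differentiable and let k ≥ 1 be a natural number. Then ∫_{−1}^{1} u(x) · P_k(x) dx = −(1/(k(k+1))) · ∫_{−1}^{1} (ℒu)(x) · P_k(x) dx, where P_k(x) is the value at x of the Rodrigues-form Legendre polynomial P_k = derivative^[k]((X² − 1)^k) and (ℒu)(x) = d/dx((1 − x²) · u'(x)). -/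
open Polynomial

/-- The Rodrigues-form Legendre polynomial `P_k = d^k/dx^k ((x² - 1)^k)`. -/
noncomputable def legendreRodrigues (k : ℕ) : ℝ[X] :=
  derivative^[k] ((X ^ 2 - 1) ^ k)

/-- The Legendre differential operator `(ℒw)(x) = d/dx((1 - x²) w'(x))`. -/
noncomputable def legendreOp (w : ℝ → ℝ) : ℝ → ℝ :=
  fun x => deriv (fun y => (1 - y ^ 2) * deriv w y) x

lemma iterDeriv_add (n : ℕ) (p q : ℝ[X]) :
    derivative^[n] (p + q) = derivative^[n] p + derivative^[n] q := by
  induction n generalizing p q with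
  | zero => simp
  | succ n ih => simp [Function.iterate_succ_apply, derivative_add, ih]

lemma iterDeriv_X_mul : ∀ (n : ℕ) (q : ℝ[X]),
    derivative^[n+1] (X * q)
      = X * derivative^[n+1] q + ((n:ℝ[X])+1) * derivative^[n] q := by
  intro n
  induction n with
  | zero => intro q; simp [derivative_mul]; ring
  | succ n ih =>
      intro q
      rw [Function.iterate_succ_apply, derivative_mul, derivative_X, one_mul, iterDeriv_add,
        ih (derivative q), ← Function.iterate_succ_apply, ← Function.iterate_succ_apply]
      push_cast
      ring

lemma iterDeriv_sq_mul : ∀ (n : ℕ) (q : ℝ[X]),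
    derivative^[n+2] ((X^2 - 1) * q)
      = (X^2 - 1) * derivative^[n+2] q + (2*((n:ℝ[X])+2)) * X * derivative^[n+1] q
        + (((n:ℝ[X])+2)*((n:ℝ[X])+1)) * derivative^[n] q := by
  intro n
  induction n with
  | zero =>
      intro q
      show derivative (derivative ((X^2-1) * q)) = _
      simp [derivative_mul, map_ofNat]
      ring
  | succ n ih =>
      intro q
      have h1 : derivative ((X^2 - 1) * q) = (X^2-1) * derivative q + C 2 * (X * q) := by
        simp [derivative_mul, map_ofNat]; ring
      rw [Function.iterate_succ_apply, h1, iterDeriv_add, ih (derivative q),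
        iterate_derivative_C_mul, iterDeriv_X_mul (n+1) q,
        ← Function.iterate_succ_apply, ← Function.iterate_succ_apply,
        ← Function.iterate_succ_apply]
      push_cast [map_ofNat]
      ring

lemma legendre_ode (k : ℕ) (hk : 1 ≤ k) :
    derivative ((1 - X^2) * derivative (legendreRodrigues k))
      = C (-((k:ℝ) * ((k:ℝ)+1))) * legendreRodrigues k := by
  obtain ⟨m, rfl⟩ : ∃ m, k = m + 1 := ⟨k-1, (Nat.succ_pred_eq_of_pos hk).symm⟩
  set f : ℝ[X] := (X^2 - 1)^(m+1) with hf
  have pearson : (X^2 - 1 : ℝ[X]) * derivative f = C (2*((m:ℝ)+1)) * (X * f) := by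
    have hpow : ((X:ℝ[X])^2 - 1)^(m+1) = (X^2-1)^m * (X^2-1) := pow_succ _ _
    rw [hf, derivative_pow, Nat.add_sub_cancel]
    simp only [derivative_sub, derivative_one, derivative_X_pow, sub_zero]
    push_cast [map_mul, map_add, map_one, map_ofNat, map_natCast]
    linear_combination (C (2*((m:ℝ)+1)) * X - (X^2-1) * (((m:ℝ[X])+1) * 2 * X)) * hpow
  have E := congrArg (derivative^[m+2]) pearson
  rw [iterDeriv_sq_mul m (derivative f), iterate_derivative_C_mul, iterDeriv_X_mul (m+1) f] at E
  have sh : ∀ j, derivative^[j] (derivative f) = derivative^[j+1] f :=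
    fun j => (Function.iterate_succ_apply derivative j f).symm
  rw [sh, sh, sh] at E
  have hP : legendreRodrigues (m+1) = derivative^[m+1] f := rfl
  have h2 : derivative^[m+2] f = derivative (legendreRodrigues (m+1)) :=
    Function.iterate_succ_apply' derivative (m+1) f
  have h3 : derivative^[m+3] f = derivative (derivative (legendreRodrigues (m+1))) := by
    rw [Function.iterate_succ_apply' derivative (m+2) f, h2]
  rw [h2, h3, ← hP] at E
  rw [derivative_mul]
  simp only [derivative_sub, derivative_one, derivative_X_pow, zero_sub, sub_zero] at *
  linear_combination (norm := (push_cast [map_neg, map_mul, map_add, map_one, map_natCast, map_ofNat]; ring1)) -E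

/-- Single-step coefficient identity from the proof of Lemma 4.1 of the
paper: `(u, L_k) = -(1/(k(k+1))) (ℒu, L_k)` for a `C²` function `u` and
`k ≥ 1`. -/
theorem legendre_coefficient_step
    (u : ℝ → ℝ) (hu : ContDiff ℝ 2 u) (k : ℕ) (hk : 1 ≤ k) :
    ∫ x in (-1 : ℝ)..1, u x * (legendreRodrigues k).eval x
      = -(1 / ((k : ℝ) * (k + 1))) *
          ∫ x in (-1 : ℝ)..1, legendreOp u x * (legendreRodrigues k).eval x := by
  set P : ℝ[X] := legendreRodrigues k with hPdef
  set c : ℝ := (k:ℝ) * ((k:ℝ) + 1) with hc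
  have hc0 : c ≠ 0 := by
    have : (1:ℝ) ≤ (k:ℝ) := by exact_mod_cast hk
    positivity
  set Q : ℝ → ℝ := fun x => P.eval x with hQ
  set R : ℝ[X] := (1 - X^2) * derivative P with hR
  set W : ℝ → ℝ := fun x => R.eval x with hW
  set V : ℝ → ℝ := fun x => (1 - x^2) * deriv u x with hV
  have hode : derivative R = C (-c) * P := legendre_ode k hk
  -- regularity of u
  have hu1 : Differentiable ℝ u := hu.differentiable (by norm_num)
  have hdu : ContDiff ℝ 1 (deriv u) := by
    have h2 : ContDiff ℝ (1+1 : ℕ) u := by exact_mod_cast hu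
    exact (contDiff_succ_iff_deriv.mp h2).2.2
  have hVC : ContDiff ℝ 1 V := by
    apply ContDiff.mul _ hdu
    fun_prop
  have hVd : Differentiable ℝ V := hVC.differentiable (by norm_num)
  have hLu : legendreOp u = deriv V := rfl
  have hcontLu : Continuous (legendreOp u) := by
    rw [hLu]; exact hVC.continuous_deriv le_rfl
  -- IBP 1 : ∫ u * W' = -∫ u' * W
  have hWderiv : ∀ x : ℝ, HasDerivAt W (-c * Q x) x := by
    intro x
    have h := R.hasDerivAt x
    rwa [hode, eval_mul, eval_C] at h
  have I1 : ∫ x in (-1:ℝ)..1, u x * (-c * Q x)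
      = u 1 * W 1 - u (-1) * W (-1) - ∫ x in (-1:ℝ)..1, deriv u x * W x := by
    apply intervalIntegral.integral_mul_deriv_eq_deriv_mul
    · exact fun x _ => (hu1 x).hasDerivAt
    · exact fun x _ => hWderiv x
    · exact (hdu.continuous).intervalIntegrable _ _
    · exact (continuous_const.mul P.continuous).intervalIntegrable _ _
  -- IBP 2 : ∫ Q * (ℒu) = -∫ Q' * V
  have I2 : ∫ x in (-1:ℝ)..1, Q x * legendreOp u x
      = Q 1 * V 1 - Q (-1) * V (-1)
        - ∫ x in (-1:ℝ)..1, (derivative P).eval x * V x := by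
    apply intervalIntegral.integral_mul_deriv_eq_deriv_mul
    · exact fun x _ => P.hasDerivAt x
    · intro x _
      exact (hVd x).hasDerivAt
    · exact ((derivative P).continuous).intervalIntegrable _ _
    · exact hcontLu.intervalIntegrable _ _
  have hW1 : W 1 = 0 := by simp [hW, hR]
  have hWm1 : W (-1) = 0 := by simp [hW, hR]
  have hV1 : V 1 = 0 := by simp [hV]
  have hVm1 : V (-1) = 0 := by simp [hV]
  rw [hW1, hWm1] at I1
  rw [hV1, hVm1] at I2
  -- identify the two remaining integrals
  have hsame : (∫ x in (-1:ℝ)..1, deriv u x * W x)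
      = ∫ x in (-1:ℝ)..1, (derivative P).eval x * V x := by
    apply intervalIntegral.integral_congr
    intro x _
    simp [hW, hR, hV, eval_mul, eval_sub, eval_pow, eval_one]
    ring
  -- pull out the constant in I1
  have hpull : (∫ x in (-1:ℝ)..1, u x * (-c * Q x))
      = -c * ∫ x in (-1:ℝ)..1, u x * Q x := by
    rw [← intervalIntegral.integral_const_mul]
    apply intervalIntegral.integral_congr
    intro x _
    ring
  have key : ∫ x in (-1:ℝ)..1, legendreOp u x * Q x
      = -c * ∫ x in (-1:ℝ)..1, u x * Q x := by
    have hcomm : (∫ x in (-1:ℝ)..1, legendreOp u x * Q x)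
        = ∫ x in (-1:ℝ)..1, Q x * legendreOp u x := by
      apply intervalIntegral.integral_congr
      intro x _
      ring
    rw [hcomm, I2, ← hsame, ← hpull, I1]
    ring
  rw [key]
  field_simp
  rfl
end
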